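/- Fix L, r_min, M > 0 with L < r_min and r > r_min. Then lim_{δ → ∞} F_δ(r) = -M, where F_δ(r) = M (r_min/r)^{δ/((r_min/L)^δ - 1)} ((L/r)^δ - 1)/(1 - (L/r_min)^δ). -/

import Mathlib

open Real Filter Set

theorem ljf_limit_delta_atTop (L rmin M : ℝ) (hL : 0 < L) (hrmin : 0 < rmin)
    (hM : 0 < M) (hLr : L < rmin) (r : ℝ) (hr : rmin < r) :
    Tendsto
      (fun δ : ℝ =>
        M * (rmin / r) ^ (δ / ((rmin / L) ^ δ - 1)) *
          ((L / r) ^ δ - 1) / (1 - (L / rmin) ^ δ))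
      atTop (nhds (-M)) := by
  have hr0 : 0 < r := hrmin.trans hr
  have ha : 1 < rmin / L := (one_lt_div hL).2 hLr
  have ha0 : 0 < rmin / L := by positivity
  have hb1 : L / rmin < 1 := (div_lt_one hrmin).2 hLr
  have hb0 : 0 < L / rmin := by positivity
  have hc1 : L / r < 1 := (div_lt_one hr0).2 (hLr.trans hr)
  have hc0 : 0 < L / r := by positivity
  -- (L/rmin)^δ → 0
  have hinv : Tendsto (fun δ : ℝ => (L / rmin) ^ δ) atTop (nhds 0) :=
    tendsto_rpow_atTop_of_base_lt_one _ (by linarith) hb1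
  -- denominator → 1
  have hden : Tendsto (fun δ : ℝ => 1 - (L / rmin) ^ δ) atTop (nhds 1) := by
    simpa using tendsto_const_nhds.sub hinv
  -- δ / (rmin/L)^δ → 0
  have hda : Tendsto (fun δ : ℝ => δ / (rmin / L) ^ δ) atTop (nhds 0) := by
    have := tendsto_rpow_mul_exp_neg_mul_atTop_nhds_zero 1 (Real.log (rmin / L))
      (Real.log_pos ha)
    refine this.congr fun δ => ?_
    rw [Real.rpow_one, Real.rpow_def_of_pos ha0, neg_mul, Real.exp_neg,
      ← div_eq_mul_inv]
  -- δ / ((rmin/L)^δ - 1) → 0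
  have hexp : Tendsto (fun δ : ℝ => δ / ((rmin / L) ^ δ - 1)) atTop (nhds 0) := by
    have h := hda.div hden one_ne_zero
    rw [zero_div] at h
    refine h.congr fun δ => ?_
    have hp0 : (0:ℝ) < (rmin / L) ^ δ := Real.rpow_pos_of_pos ha0 δ
    have hinveq : (L / rmin) ^ δ = ((rmin / L) ^ δ)⁻¹ := by
      rw [show L / rmin = (rmin / L)⁻¹ from (inv_div rmin L).symm,
        Real.inv_rpow ha0.le]
    simp only [Pi.div_apply]
    rw [hinveq, div_div, mul_sub, mul_one, mul_inv_cancel₀ hp0.ne']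
  -- (rmin/r)^(δ/((rmin/L)^δ-1)) → 1
  have hpow1 : Tendsto (fun δ : ℝ => (rmin / r) ^ (δ / ((rmin / L) ^ δ - 1)))
      atTop (nhds 1) := by
    have := (tendsto_const_nhds :
        Tendsto (fun _ : ℝ => rmin / r) atTop (nhds (rmin / r))).rpow hexp
      (Or.inl (by positivity))
    simpa using this
  -- (L/r)^δ - 1 → -1
  have hnum : Tendsto (fun δ : ℝ => (L / r) ^ δ - 1) atTop (nhds (-1)) := by
    have := (tendsto_rpow_atTop_of_base_lt_one (L / r) (by linarith) hc1).sub
      (tendsto_const_nhds : Tendsto (fun _ : ℝ => (1:ℝ)) atTop (nhds 1))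
    simpa using this
  have := (((tendsto_const_nhds (x := M)).mul hpow1).mul hnum).div hden one_ne_zero
  simpa [Pi.div_def] using this
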